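/- Let n ≥ 1, let F : ℝ^{4n} → ℝ and φ : ℝ → ℝ be smooth, and set f = φ ∘ F. Then for every x ∈ ℝ^{4n} and every vector Z ∈ ℝ^{4n}: P_f(x)(Z) = φ'(F(x))·P_F(x)(Z) + φ'''(F(x))·|∇F(x)|²·⟨∇F(x), Z⟩ + 2φ''(F(x))·D²F(x)[Z, ∇F(x)] + φ''(F(x))·ΔF(x)·⟨∇F(x), Z⟩ + φ''(F(x))·Σ_{s=1}^{3} ( Σ_{a=1}^{4n} D²F(x)[e_a, I_s e_a] )·⟨∇F(x), I_s Z⟩. -/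

import Mathlib

open scoped RealInnerProductSpace

noncomputable section

/-- `ℝ^{4n}` identified with `ℍⁿ`: the `4n` real coordinates are indexed by pairs
`(a, t)` where `a` numbers the quaternionic component and `t ∈ {0,1,2,3}` the
real coordinates `1, i, j, k` of that quaternion. -/
abbrev Qn (n : ℕ) := EuclideanSpace ℝ (Fin n × Fin 4)

/-- The three almost complex structures `I₁, I₂, I₃` on `ℝ^{4n} = ℍⁿ`, given by
componentwise left multiplication by the quaternion units `i, j, k`. -/
def Iop (n : ℕ) (s : Fin 3) (x : Qn n) : Qn n := WithLp.toLp 2 fun (p : Fin n × Fin 4) =>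
  ![ ![ -x (p.1, 1),  x (p.1, 0), -x (p.1, 3),  x (p.1, 2) ],
     ![ -x (p.1, 2),  x (p.1, 3),  x (p.1, 0), -x (p.1, 1) ],
     ![ -x (p.1, 3), -x (p.1, 2),  x (p.1, 1),  x (p.1, 0) ] ] s p.2

/-- The standard orthonormal basis of `ℝ^{4n}`. -/
def eQ (n : ℕ) (p : Fin n × Fin 4) : Qn n := EuclideanSpace.single p 1

/-- Second Fréchet derivative as a bilinear form. -/
def D2Q (n : ℕ) (g : Qn n → ℝ) (x X Y : Qn n) : ℝ := iteratedFDeriv ℝ 2 g x ![X, Y]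

/-- Third Fréchet derivative as a trilinear form. -/
def D3Q (n : ℕ) (g : Qn n → ℝ) (x Z X Y : Qn n) : ℝ := iteratedFDeriv ℝ 3 g x ![Z, X, Y]

/-- The Laplacian `Δg(x) = Σ_a D²g(x)[e_a, e_a]`. -/
def lapQ (n : ℕ) (g : Qn n → ℝ) (x : Qn n) : ℝ := ∑ p, D2Q n g x (eQ n p) (eQ n p)

/-- The flat quaternionic P-form
`P_g(x)(Z) = Σ_b D³g(x)[Z,e_b,e_b] + Σ_{s=1}^3 Σ_b D³g(x)[I_s Z, e_b, I_s e_b]`. -/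
def PQ (n : ℕ) (g : Qn n → ℝ) (x Z : Qn n) : ℝ :=
  (∑ b, D3Q n g x Z (eQ n b) (eQ n b)) +
    ∑ s : Fin 3, ∑ b, D3Q n g x (Iop n s Z) (eQ n b) (Iop n s (eQ n b))

variable {n : ℕ}

variable {n : ℕ}

lemma smooth_dW (F : Qn n → ℝ) (hF : ContDiff ℝ (⊤:ℕ∞) F) (W : Qn n) :
    ContDiff ℝ (⊤:ℕ∞) (fun y => fderiv ℝ F y W) :=
  (hF.fderiv_right (by simp)).clm_apply contDiff_const

lemma grad_inner (F : Qn n → ℝ) (x W : Qn n) : ⟪gradient F x, W⟫ = fderiv ℝ F x W := by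
  rw [gradient, InnerProductSpace.toDual_symm_apply]

lemma comp_fderiv (F : Qn n → ℝ) (hF : ContDiff ℝ (⊤:ℕ∞) F) (ψ : ℝ → ℝ)
    (hψ : ContDiff ℝ (⊤:ℕ∞) ψ) (y W : Qn n) :
    fderiv ℝ (fun z => ψ (F z)) y W = deriv ψ (F y) * fderiv ℝ F y W := by
  have h1 : DifferentiableAt ℝ ψ (F y) := (hψ.differentiable (by simp)) _
  have h2 : DifferentiableAt ℝ F y := (hF.differentiable (by simp)) _
  rw [show (fun z => ψ (F z)) = ψ ∘ F from rfl, fderiv_comp y h1 h2]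
  simp only [ContinuousLinearMap.comp_apply]
  have : fderiv ℝ F y W = (fderiv ℝ F y W) • (1:ℝ) := by simp
  rw [this, ContinuousLinearMap.map_smul, fderiv_apply_one_eq_deriv, smul_eq_mul]
  simp [mul_comm]


lemma hF'diff (F : Qn n → ℝ) (hF : ContDiff ℝ (⊤:ℕ∞) F) (y : Qn n) :
    DifferentiableAt ℝ (fderiv ℝ F) y :=
  ((hF.fderiv_right (m := (⊤:ℕ∞)) (by simp)).differentiable (by simp)) y

lemma D2_clm (F : Qn n → ℝ) (hF : ContDiff ℝ (⊤:ℕ∞) F) (x X Y : Qn n) :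
    fderiv ℝ (fun y => fderiv ℝ F y Y) x X = (fderiv ℝ (fderiv ℝ F) x X) Y := by
  rw [fderiv_clm_apply (hF'diff F hF x) (differentiableAt_const Y)]
  simp

lemma D2_eq (F : Qn n → ℝ) (hF : ContDiff ℝ (⊤:ℕ∞) F) (x X Y : Qn n) :
    D2Q n F x X Y = fderiv ℝ (fun y => fderiv ℝ F y Y) x X := by
  rw [D2Q, iteratedFDeriv_two_apply, D2_clm F hF]
  simp

lemma htop2 : ((⊤:ℕ∞) : WithTop ℕ∞) + 2 ≤ ((⊤:ℕ∞) : WithTop ℕ∞) := by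
  have h22 : ((2:ℕ∞) : WithTop ℕ∞) = (2 : WithTop ℕ∞) := by norm_cast
  rw [← h22, ← WithTop.coe_add]
  exact_mod_cast (by simp : (⊤:ℕ∞) + 2 ≤ ⊤)

lemma D3_eq (F : Qn n → ℝ) (hF : ContDiff ℝ (⊤:ℕ∞) F) (x Z X Y : Qn n) :
    D3Q n F x Z X Y
      = fderiv ℝ (fun y => fderiv ℝ (fun z => fderiv ℝ F z Y) y X) x Z := by
  have h2 : DifferentiableAt ℝ (iteratedFDeriv ℝ 2 F) x :=
    ((hF.iteratedFDeriv_right (m := (⊤:ℕ∞)) htop2).differentiable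
      (by simp)) x
  have key : (fun y => iteratedFDeriv ℝ 2 F y ![X, Y])
      = fun y => fderiv ℝ (fun z => fderiv ℝ F z Y) y X :=
    funext fun y => D2_eq F hF y X Y
  have htail : Fin.tail ![Z, X, Y] = ![X, Y] := by
    funext i; fin_cases i <;> rfl
  rw [D3Q, iteratedFDeriv_succ_apply_left]
  simp only [Matrix.cons_val_zero, htail]
  rw [← fderiv_continuousMultilinear_apply_const_apply h2 ![X, Y] Z, ← key]

lemma diffAt {g : Qn n → ℝ} (hg : ContDiff ℝ (⊤:ℕ∞) g) (y : Qn n) :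
    DifferentiableAt ℝ g y := (hg.differentiable (by simp)) y

lemma fderiv_mul_apply' {c d : Qn n → ℝ} {x : Qn n} (hc : DifferentiableAt ℝ c x)
    (hd : DifferentiableAt ℝ d x) (W : Qn n) :
    fderiv ℝ (fun y => c y * d y) x W = c x * fderiv ℝ d x W + d x * fderiv ℝ c x W := by
  rw [fderiv_fun_mul hc hd]
  simp [smul_eq_mul]

lemma fderiv_add_apply' {c d : Qn n → ℝ} {x : Qn n} (hc : DifferentiableAt ℝ c x)
    (hd : DifferentiableAt ℝ d x) (W : Qn n) :
    fderiv ℝ (fun y => c y + d y) x W = fderiv ℝ c x W + fderiv ℝ d x W := by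
  rw [fderiv_fun_add hc hd]
  simp

lemma D3_comp (F : Qn n → ℝ) (φ : ℝ → ℝ) (hF : ContDiff ℝ (⊤:ℕ∞) F)
    (hφ : ContDiff ℝ (⊤:ℕ∞) φ) (x A B C : Qn n) :
    D3Q n (φ ∘ F) x A B C =
      deriv^[3] φ (F x) * (fderiv ℝ F x A * (fderiv ℝ F x B * fderiv ℝ F x C))
      + deriv^[2] φ (F x) * (D2Q n F x A B * fderiv ℝ F x C
          + D2Q n F x A C * fderiv ℝ F x B + D2Q n F x B C * fderiv ℝ F x A)
      + deriv φ (F x) * D3Q n F x A B C := by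
  have hφ1 : ContDiff ℝ (⊤:ℕ∞) (deriv φ) := hφ.iterate_deriv 1
  have hφ2 : ContDiff ℝ (⊤:ℕ∞) (deriv (deriv φ)) := hφ1.iterate_deriv 1
  have hfc : ContDiff ℝ (⊤:ℕ∞) (φ ∘ F) := hφ.comp hF
  -- smoothness of auxiliary functions
  have hdB : ContDiff ℝ (⊤:ℕ∞) (fun y => fderiv ℝ F y B) := smooth_dW F hF B
  have hdC : ContDiff ℝ (⊤:ℕ∞) (fun y => fderiv ℝ F y C) := smooth_dW F hF C
  have hBC : ContDiff ℝ (⊤:ℕ∞) (fun y => fderiv ℝ (fun z => fderiv ℝ F z C) y B) :=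
    smooth_dW _ hdC B
  have hψ1F : ContDiff ℝ (⊤:ℕ∞) (fun y => deriv φ (F y)) := hφ1.comp hF
  have hψ2F : ContDiff ℝ (⊤:ℕ∞) (fun y => deriv (deriv φ) (F y)) := hφ2.comp hF
  -- first derivative
  have e1 : (fun z => fderiv ℝ (φ ∘ F) z C)
      = fun z => deriv φ (F z) * fderiv ℝ F z C :=
    funext fun y => comp_fderiv F hF φ hφ y C
  -- second derivative
  have e2 : (fun y => fderiv ℝ (fun z => fderiv ℝ (φ ∘ F) z C) y B)
      = fun y => (deriv (deriv φ) (F y) * fderiv ℝ F y B) * fderiv ℝ F y C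
          + deriv φ (F y) * fderiv ℝ (fun z => fderiv ℝ F z C) y B := by
    funext y
    rw [e1, fderiv_mul_apply' (diffAt hψ1F y) (diffAt hdC y) B,
      comp_fderiv F hF (deriv φ) hφ1 y B]
    ring
  -- third derivative
  rw [D3_eq (φ ∘ F) hfc x A B C, e2]
  rw [fderiv_add_apply'
      (c := fun y => deriv (deriv φ) (F y) * fderiv ℝ F y B * fderiv ℝ F y C)
      (d := fun y => deriv φ (F y) * fderiv ℝ (fun z => fderiv ℝ F z C) y B)
      (((diffAt (hψ2F.mul hdB) x).mul (diffAt hdC x)) :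
        DifferentiableAt ℝ (fun y => (deriv (deriv φ) (F y) * fderiv ℝ F y B) * fderiv ℝ F y C) x)
      ((diffAt hψ1F x).mul (diffAt hBC x)) A]
  rw [fderiv_mul_apply' (c := fun y => deriv (deriv φ) (F y) * fderiv ℝ F y B)
    (d := fun y => fderiv ℝ F y C) ((diffAt hψ2F x).mul (diffAt hdB x)) (diffAt hdC x) A]
  rw [fderiv_mul_apply' (diffAt hψ2F x) (diffAt hdB x) A]
  rw [fderiv_mul_apply' (diffAt hψ1F x) (diffAt hBC x) A]
  rw [comp_fderiv F hF (deriv (deriv φ)) hφ2 x A, comp_fderiv F hF (deriv φ) hφ1 x A]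
  rw [← D3_eq F hF x A B C]
  rw [← D2_eq F hF x A B, ← D2_eq F hF x A C, ← D2_eq F hF x B C]
  have i2 : deriv^[2] φ = deriv (deriv φ) := by
    funext t; rw [Function.iterate_succ_apply', Function.iterate_one]
  have i3 : deriv^[3] φ = deriv (deriv (deriv φ)) := by
    funext t; rw [Function.iterate_succ_apply', i2]
  rw [i2, i3]
  ring


lemma decomp (v : Qn n) : ∑ b, v b • eQ n b = v := by
  ext p
  rw [WithLp.ofLp_sum, Finset.sum_apply]
  simp [eQ, EuclideanSpace.single_apply]

lemma clm_sum (T : Qn n →L[ℝ] ℝ) (v : Qn n) : ∑ b, v b * T (eQ n b) = T v := by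
  conv_rhs => rw [← decomp v]
  rw [map_sum]
  simp [smul_eq_mul]

lemma inner_eQ (v : Qn n) (b : Fin n × Fin 4) : ⟪v, eQ n b⟫ = v b := by
  simp [eQ, PiLp.inner_apply, EuclideanSpace.single_apply, RCLike.inner_apply, conj_trivial]

lemma inner_expand (x y : Qn n) : ⟪x, y⟫ = ∑ p, x p * y p := by
  simp [PiLp.inner_apply, RCLike.inner_apply, conj_trivial]
  exact Finset.sum_congr rfl fun _ _ => mul_comm _ _

lemma norm_sq_expand (v : Qn n) : ‖v‖^2 = ∑ b, v b * v b := by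
  rw [← real_inner_self_eq_norm_sq, inner_expand]


def IopL (n : ℕ) (s : Fin 3) : Qn n →L[ℝ] Qn n :=
  LinearMap.toContinuousLinearMap
    { toFun := Iop n s
      map_add' := by
        intro x y; ext p; obtain ⟨a, t⟩ := p
        fin_cases s <;> fin_cases t <;>
          simp [Iop, PiLp.add_apply] <;> ring
      map_smul' := by
        intro c x; ext p; obtain ⟨a, t⟩ := p
        fin_cases s <;> fin_cases t <;>
          simp [Iop, PiLp.smul_apply, smul_eq_mul] <;> ring }

lemma IopL_apply (s : Fin 3) (x : Qn n) : IopL n s x = Iop n s x := rfl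

lemma skew (s : Fin 3) (x y : Qn n) : ⟪Iop n s x, y⟫ = -⟪x, Iop n s y⟫ := by
  have h : ⟪Iop n s x, y⟫ + ⟪x, Iop n s y⟫ = 0 := by
    simp only [PiLp.inner_apply, RCLike.inner_apply, conj_trivial]
    rw [← Finset.sum_add_distrib, Fintype.sum_prod_type]
    apply Finset.sum_eq_zero
    intro a _
    fin_cases s <;> (rw [Fin.sum_univ_four]; simp [Iop] <;> ring)
  linarith

section sums
variable (F : Qn n → ℝ) (x : Qn n)

lemma D2_clm2 (hF : ContDiff ℝ (⊤:ℕ∞) F) (X Y : Qn n) : D2Q n F x X Y = (fderiv ℝ (fderiv ℝ F) x X) Y := by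
  rw [D2_eq F hF, D2_clm F hF]

lemma fderiv_eQ (b : Fin n × Fin 4) : fderiv ℝ F x (eQ n b) = gradient F x b := by
  rw [← grad_inner, inner_eQ]

lemma S1 : ∑ b, fderiv ℝ F x (eQ n b) * fderiv ℝ F x (eQ n b) = ‖gradient F x‖^2 := by
  simp only [fderiv_eQ F x]
  rw [norm_sq_expand]

lemma S2 (hF : ContDiff ℝ (⊤:ℕ∞) F) (Z : Qn n) :
    ∑ b, D2Q n F x Z (eQ n b) * fderiv ℝ F x (eQ n b) = D2Q n F x Z (gradient F x) := by
  simp only [D2_clm2 F x hF, fderiv_eQ F x]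
  rw [← clm_sum (fderiv ℝ (fderiv ℝ F) x Z) (gradient F x)]
  exact Finset.sum_congr rfl fun b _ => mul_comm _ _

lemma inner_Iop_self (s : Fin 3) (v : Qn n) : ⟪v, Iop n s v⟫ = 0 := by
  have h := skew s v v
  have h2 := real_inner_comm (Iop n s v) v
  linarith

lemma S4 (s : Fin 3) :
    ∑ b, fderiv ℝ F x (eQ n b) * fderiv ℝ F x (Iop n s (eQ n b)) = 0 := by
  have h1 : ∀ W, fderiv ℝ F x W = ⟪gradient F x, W⟫ := fun W => (grad_inner F x W).symm
  have h2 := clm_sum ((innerSL ℝ (gradient F x)).comp (IopL n s)) (gradient F x)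
  simp only [ContinuousLinearMap.comp_apply, IopL_apply, innerSL_apply_apply] at h2
  simp only [fderiv_eQ F x, h1]
  rw [h2, inner_Iop_self]

lemma S5 (hF : ContDiff ℝ (⊤:ℕ∞) F) (s : Fin 3) (Z : Qn n) :
    ∑ b, (D2Q n F x (Iop n s Z) (eQ n b) * fderiv ℝ F x (Iop n s (eQ n b))
      + D2Q n F x (Iop n s Z) (Iop n s (eQ n b)) * fderiv ℝ F x (eQ n b)) = 0 := by
  have h1 : ∀ W, fderiv ℝ F x W = ⟪gradient F x, W⟫ := fun W => (grad_inner F x W).symm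
  have key : ∀ b, D2Q n F x (Iop n s Z) (eQ n b) * fderiv ℝ F x (Iop n s (eQ n b))
      + D2Q n F x (Iop n s Z) (Iop n s (eQ n b)) * fderiv ℝ F x (eQ n b)
      = -((Iop n s (gradient F x)) b * (fderiv ℝ (fderiv ℝ F) x (Iop n s Z)) (eQ n b))
        + (gradient F x) b *
            (((fderiv ℝ (fderiv ℝ F) x (Iop n s Z)).comp (IopL n s)) (eQ n b)) := by
    intro b
    have hsk := skew s (gradient F x) (eQ n b)
    rw [inner_eQ] at hsk
    rw [h1 (Iop n s (eQ n b)), fderiv_eQ F x b, D2_clm2 F x hF, D2_clm2 F x hF]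
    simp only [ContinuousLinearMap.comp_apply, IopL_apply]
    rw [hsk]
    ring
  rw [Finset.sum_congr rfl (fun b _ => key b), Finset.sum_add_distrib]
  rw [Finset.sum_neg_distrib, clm_sum (fderiv ℝ (fderiv ℝ F) x (Iop n s Z)) (Iop n s (gradient F x)),
    clm_sum ((fderiv ℝ (fderiv ℝ F) x (Iop n s Z)).comp (IopL n s)) (gradient F x)]
  simp only [ContinuousLinearMap.comp_apply, IopL_apply]
  ring

end sums

/-- change of the dependent variable in the P-form, `f = φ ∘ F`. -/
theorem qc_P_form_chain_rule (n : ℕ) (hn : 1 ≤ n) (F : Qn n → ℝ) (φ : ℝ → ℝ)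
    (hF : ContDiff ℝ (⊤ : ℕ∞) F) (hφ : ContDiff ℝ (⊤ : ℕ∞) φ)
    (f : Qn n → ℝ) (hf : f = φ ∘ F) (x Z : Qn n) :
    PQ n f x Z =
      deriv φ (F x) * PQ n F x Z
      + deriv^[3] φ (F x) * ‖gradient F x‖ ^ 2 * ⟪gradient F x, Z⟫
      + 2 * deriv^[2] φ (F x) * D2Q n F x Z (gradient F x)
      + deriv^[2] φ (F x) * lapQ n F x * ⟪gradient F x, Z⟫
      + deriv^[2] φ (F x) *
          ∑ s : Fin 3, (∑ a, D2Q n F x (eQ n a) (Iop n s (eQ n a))) *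
            ⟪gradient F x, Iop n s Z⟫ := by
  subst hf
  simp only [PQ, lapQ, grad_inner F x]
  simp only [D3_comp F φ hF hφ x]
  have hA : ∑ b, (deriv^[3] φ (F x) * (fderiv ℝ F x Z * (fderiv ℝ F x (eQ n b) * fderiv ℝ F x (eQ n b)))
        + deriv^[2] φ (F x) * (D2Q n F x Z (eQ n b) * fderiv ℝ F x (eQ n b)
            + D2Q n F x Z (eQ n b) * fderiv ℝ F x (eQ n b)
            + D2Q n F x (eQ n b) (eQ n b) * fderiv ℝ F x Z)
        + deriv φ (F x) * D3Q n F x Z (eQ n b) (eQ n b))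
      = deriv^[3] φ (F x) * fderiv ℝ F x Z * ‖gradient F x‖^2
        + 2 * deriv^[2] φ (F x) * D2Q n F x Z (gradient F x)
        + deriv^[2] φ (F x) * fderiv ℝ F x Z * (∑ b, D2Q n F x (eQ n b) (eQ n b))
        + deriv φ (F x) * ∑ b, D3Q n F x Z (eQ n b) (eQ n b) := by
    calc ∑ b, (deriv^[3] φ (F x) * (fderiv ℝ F x Z * (fderiv ℝ F x (eQ n b) * fderiv ℝ F x (eQ n b)))
        + deriv^[2] φ (F x) * (D2Q n F x Z (eQ n b) * fderiv ℝ F x (eQ n b)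
            + D2Q n F x Z (eQ n b) * fderiv ℝ F x (eQ n b)
            + D2Q n F x (eQ n b) (eQ n b) * fderiv ℝ F x Z)
        + deriv φ (F x) * D3Q n F x Z (eQ n b) (eQ n b))
        = ∑ b, ((deriv^[3] φ (F x) * fderiv ℝ F x Z) * (fderiv ℝ F x (eQ n b) * fderiv ℝ F x (eQ n b))
            + ((2 * deriv^[2] φ (F x)) * (D2Q n F x Z (eQ n b) * fderiv ℝ F x (eQ n b))
            + ((deriv^[2] φ (F x) * fderiv ℝ F x Z) * D2Q n F x (eQ n b) (eQ n b)
            + deriv φ (F x) * D3Q n F x Z (eQ n b) (eQ n b)))) :=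
          Finset.sum_congr rfl fun b _ => by ring
      _ = _ := by
          rw [Finset.sum_add_distrib, Finset.sum_add_distrib, Finset.sum_add_distrib,
            ← Finset.mul_sum, ← Finset.mul_sum, ← Finset.mul_sum, ← Finset.mul_sum,
            S1 F x, S2 F x hF Z]
          ring
  have hB : ∀ s : Fin 3,
      ∑ b, (deriv^[3] φ (F x) * (fderiv ℝ F x (Iop n s Z) * (fderiv ℝ F x (eQ n b) * fderiv ℝ F x (Iop n s (eQ n b))))
        + deriv^[2] φ (F x) * (D2Q n F x (Iop n s Z) (eQ n b) * fderiv ℝ F x (Iop n s (eQ n b))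
            + D2Q n F x (Iop n s Z) (Iop n s (eQ n b)) * fderiv ℝ F x (eQ n b)
            + D2Q n F x (eQ n b) (Iop n s (eQ n b)) * fderiv ℝ F x (Iop n s Z))
        + deriv φ (F x) * D3Q n F x (Iop n s Z) (eQ n b) (Iop n s (eQ n b)))
      = deriv^[2] φ (F x) * ((∑ a, D2Q n F x (eQ n a) (Iop n s (eQ n a))) * fderiv ℝ F x (Iop n s Z))
        + deriv φ (F x) * ∑ b, D3Q n F x (Iop n s Z) (eQ n b) (Iop n s (eQ n b)) := by
    intro s
    calc ∑ b, (deriv^[3] φ (F x) * (fderiv ℝ F x (Iop n s Z) * (fderiv ℝ F x (eQ n b) * fderiv ℝ F x (Iop n s (eQ n b))))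
        + deriv^[2] φ (F x) * (D2Q n F x (Iop n s Z) (eQ n b) * fderiv ℝ F x (Iop n s (eQ n b))
            + D2Q n F x (Iop n s Z) (Iop n s (eQ n b)) * fderiv ℝ F x (eQ n b)
            + D2Q n F x (eQ n b) (Iop n s (eQ n b)) * fderiv ℝ F x (Iop n s Z))
        + deriv φ (F x) * D3Q n F x (Iop n s Z) (eQ n b) (Iop n s (eQ n b)))
        = ∑ b, ((deriv^[3] φ (F x) * fderiv ℝ F x (Iop n s Z)) * (fderiv ℝ F x (eQ n b) * fderiv ℝ F x (Iop n s (eQ n b)))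
            + (deriv^[2] φ (F x) * (D2Q n F x (Iop n s Z) (eQ n b) * fderiv ℝ F x (Iop n s (eQ n b))
                + D2Q n F x (Iop n s Z) (Iop n s (eQ n b)) * fderiv ℝ F x (eQ n b))
            + ((deriv^[2] φ (F x) * fderiv ℝ F x (Iop n s Z)) * D2Q n F x (eQ n b) (Iop n s (eQ n b))
            + deriv φ (F x) * D3Q n F x (Iop n s Z) (eQ n b) (Iop n s (eQ n b))))) :=
          Finset.sum_congr rfl fun b _ => by ring
      _ = _ := by
          rw [Finset.sum_add_distrib, Finset.sum_add_distrib, Finset.sum_add_distrib,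
            ← Finset.mul_sum, ← Finset.mul_sum, ← Finset.mul_sum, ← Finset.mul_sum,
            S4 F x s, S5 F x hF s Z]
          ring
  rw [hA, Finset.sum_congr rfl (fun s _ => hB s), Finset.sum_add_distrib,
    ← Finset.mul_sum, ← Finset.mul_sum]
  ring
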